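/- arXiv:2010.08544 — 2 statements merged into one kernel-verified Lean document; each statement's English description precedes it below -/
import Mathlib

section
/- Let (X, d, μ) be a metric probability space with concentration function α, let L be a countable label set, and let h : X → L be a measurable classifier. Let η ∈ (0, 1/2] be such that μ(h⁻¹{l}) ≤ 1 − η for every l ∈ L, let γ ∈ (0, 1], and let ε₁, ε₂ > 0 satisfy α(ε₁) < η/2 and α(ε₂) < γ/2. Then the prediction-change adversarial risk satisfies R^{PC}_{ε₁+ε₂}(h, μ) > 1 − γ. -/
open MeasureTheory Metric Finset
open scoped ComplexOrder ENNReal NNReal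

noncomputable section

/-- Concentration function of a metric probability space:
`α(ε) = 1 - inf {μ(A_ε) : A Borel, μ(A) ≥ 1/2}`, where `A_ε` is the `ε`-expansion
`{x : dist(x, A) ≤ ε}` (realized as `Metric.cthickening`). -/
def concFn {X : Type*} [PseudoEMetricSpace X] [MeasurableSpace X] (μ : Measure X) (ε : ℝ) : ℝ :=
  1 - sInf {r : ℝ | ∃ A : Set X, MeasurableSet A ∧ 1/2 ≤ μ A ∧
    r = (μ (Metric.cthickening ε A)).toReal}

/-- The set of samples whose distance to the nearest differently-labeled sample is at
most `ε`; its measure is the prediction-change adversarial risk `R^{PC}_ε(h, μ)`. -/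
def pcSet {X L : Type*} [PseudoMetricSpace X] (h : X → L) (ε : ℝ) : Set X :=
  {x | sInf {r : ℝ | ∃ x', h x' ≠ h x ∧ r = dist x x'} ≤ ε}

/-- Auxiliary: the lower bound for the measure of an `ε`-expansion of a set of
measure at least `1/2`, coming from the concentration function. -/
lemma conc_lt {X : Type*} [PseudoEMetricSpace X] [MeasurableSpace X]
    (μ : Measure X) [IsProbabilityMeasure μ] {ε c : ℝ}
    (hc : concFn μ ε < c) (hc1 : c ≤ 1) {T : Set X} (hT : MeasurableSet T)
    (hT2 : 1/2 ≤ μ T) :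
    ENNReal.ofReal (1 - c) < μ (Metric.cthickening ε T) := by
  have hne : μ (Metric.cthickening ε T) ≠ ⊤ := measure_ne_top μ _
  have hmem : (μ (Metric.cthickening ε T)).toReal ∈
      {r : ℝ | ∃ A : Set X, MeasurableSet A ∧ 1/2 ≤ μ A ∧
        r = (μ (Metric.cthickening ε A)).toReal} := ⟨T, hT, hT2, rfl⟩
  have hbdd : BddBelow {r : ℝ | ∃ A : Set X, MeasurableSet A ∧ 1/2 ≤ μ A ∧
      r = (μ (Metric.cthickening ε A)).toReal} := by
    refine ⟨0, fun r hr => ?_⟩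
    obtain ⟨A, -, -, rfl⟩ := hr
    exact ENNReal.toReal_nonneg
  have h1 : sInf {r : ℝ | ∃ A : Set X, MeasurableSet A ∧ 1/2 ≤ μ A ∧
      r = (μ (Metric.cthickening ε A)).toReal} ≤ (μ (Metric.cthickening ε T)).toReal :=
    csInf_le hbdd hmem
  have h2 : 1 - c < (μ (Metric.cthickening ε T)).toReal := by
    unfold concFn at hc; linarith
  exact (ENNReal.ofReal_lt_iff_lt_toReal (by linarith) hne).2 h2

/-- Auxiliary: the complement of the expansion of a set of measure `≥ 1/2` has
measure at most `c` whenever `concFn μ ε < c`. -/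
lemma conc_compl {X : Type*} [PseudoEMetricSpace X] [MeasurableSpace X] [OpensMeasurableSpace X]
    (μ : Measure X) [IsProbabilityMeasure μ] {ε c : ℝ}
    (hc : concFn μ ε < c) (hc1 : c ≤ 1) {T : Set X} (hT : MeasurableSet T)
    (hT2 : 1/2 ≤ μ T) :
    μ (Metric.cthickening ε T)ᶜ ≤ ENNReal.ofReal c := by
  have hlt := conc_lt μ hc hc1 hT hT2
  have hcompl : μ (Metric.cthickening ε T)ᶜ = 1 - μ (Metric.cthickening ε T) :=
    prob_compl_eq_one_sub (Metric.isClosed_cthickening).measurableSet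
  rw [hcompl]
  have key : (1 : ℝ≥0∞) - ENNReal.ofReal (1 - c) = ENNReal.ofReal c := by
    rw [← ENNReal.ofReal_one, ← ENNReal.ofReal_sub _ (by linarith : (0:ℝ) ≤ 1 - c)]
    norm_num
  calc 1 - μ (Metric.cthickening ε T) ≤ 1 - ENNReal.ofReal (1 - c) :=
        tsub_le_tsub_left hlt.le 1
    _ = ENNReal.ofReal c := key

/-- Auxiliary: from any finset satisfying `P`, extract one that is minimal in the
sense that no single element can be removed. -/
lemma exists_minimal_finset {α : Type*} [DecidableEq α] (P : Finset α → Prop)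
    (F : Finset α) (hF : P F) :
    ∃ G : Finset α, P G ∧ ∀ a ∈ G, ¬ P (G.erase a) := by
  induction F using Finset.strongInduction with
  | _ F ih =>
    by_cases hall : ∀ a ∈ F, ¬ P (F.erase a)
    · exact ⟨F, hF, hall⟩
    · push_neg at hall
      obtain ⟨a, ha, hPa⟩ := hall
      exact ih (F.erase a) (Finset.erase_ssubset ha) hPa

/-- concentration of measure forces a large prediction-change
adversarial risk under `(ε₁ + ε₂)`-perturbations. -/
theorem stmt1 {X L : Type*} [MetricSpace X] [MeasurableSpace X] [BorelSpace X] [Countable L]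
    (μ : Measure X) [IsProbabilityMeasure μ]
    (h : X → L) (hmeas : ∀ l : L, MeasurableSet (h ⁻¹' {l}))
    (η γ ε₁ ε₂ : ℝ) (hη : η ∈ Set.Ioc (0 : ℝ) (1/2)) (hγ : γ ∈ Set.Ioc (0 : ℝ) 1)
    (hε₁ : 0 < ε₁) (hε₂ : 0 < ε₂)
    (hclass : ∀ l : L, μ (h ⁻¹' {l}) ≤ ENNReal.ofReal (1 - η))
    (hα₁ : concFn μ ε₁ < η / 2) (hα₂ : concFn μ ε₂ < γ / 2) :
    ENNReal.ofReal (1 - γ) < μ (pcSet h (ε₁ + ε₂)) := by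
  classical
  obtain ⟨hη0, hη2⟩ := hη
  obtain ⟨hγ0, hγ1⟩ := hγ
  by_contra hcon
  push_neg at hcon
  -- choice of thresholds
  set t : ℝ := (max (concFn μ ε₂) 0 + γ/2) / 2 with ht_def
  set t' : ℝ := (max (concFn μ ε₁) 0 + η/2) / 2 with ht'_def
  have hmax2 : max (concFn μ ε₂) 0 < γ/2 := max_lt hα₂ (by linarith)
  have hmax1 : max (concFn μ ε₁) 0 < η/2 := max_lt hα₁ (by linarith)
  have ht_pos : 0 < t := by
    have := le_max_right (concFn μ ε₂) 0; simp only [ht_def]; linarith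
  have ht'_pos : 0 < t' := by
    have := le_max_right (concFn μ ε₁) 0; simp only [ht'_def]; linarith
  have htc : concFn μ ε₂ < t := by
    have := le_max_left (concFn μ ε₂) 0; simp only [ht_def]; linarith
  have ht'c : concFn μ ε₁ < t' := by
    have := le_max_left (concFn μ ε₁) 0; simp only [ht'_def]; linarith
  have ht_lt : t < γ/2 := by simp only [ht_def]; linarith
  have ht'_lt : t' < η/2 := by simp only [ht'_def]; linarith
  have ht1 : t ≤ 1 := by linarith
  have ht'1 : t' ≤ 1 := by linarith
  have ht'q : t' ≤ 1/4 := by linarith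
  have half_eq : ENNReal.ofReal (1/2 : ℝ) = (1/2 : ℝ≥0∞) := by
    rw [ENNReal.ofReal_div_of_pos (by norm_num : (0:ℝ) < 2), ENNReal.ofReal_one,
      ENNReal.ofReal_ofNat]
  -- the robust set has measure at least γ
  have hS : ENNReal.ofReal γ ≤ μ (pcSet h (ε₁ + ε₂))ᶜ := by
    have h1 : (1 : ℝ≥0∞) ≤ μ (pcSet h (ε₁ + ε₂)) + μ (pcSet h (ε₁ + ε₂))ᶜ := by
      calc (1 : ℝ≥0∞) = μ Set.univ := (measure_univ (μ := μ)).symm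
        _ = μ (pcSet h (ε₁ + ε₂) ∪ (pcSet h (ε₁ + ε₂))ᶜ) := by rw [Set.union_compl_self]
        _ ≤ _ := measure_union_le _ _
    have h2 : (1 : ℝ≥0∞) ≤ μ (pcSet h (ε₁ + ε₂))ᶜ + ENNReal.ofReal (1 - γ) := by
      calc (1 : ℝ≥0∞) ≤ μ (pcSet h (ε₁ + ε₂)) + μ (pcSet h (ε₁ + ε₂))ᶜ := h1
        _ ≤ ENNReal.ofReal (1 - γ) + μ (pcSet h (ε₁ + ε₂))ᶜ := by
            exact add_le_add_left hcon _
        _ = μ (pcSet h (ε₁ + ε₂))ᶜ + ENNReal.ofReal (1 - γ) := add_comm _ _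
    have h3 : (1 : ℝ≥0∞) - ENNReal.ofReal (1 - γ) ≤ μ (pcSet h (ε₁ + ε₂))ᶜ :=
      tsub_le_iff_right.2 h2
    calc ENNReal.ofReal γ = (1 : ℝ≥0∞) - ENNReal.ofReal (1 - γ) := by
          rw [← ENNReal.ofReal_one, ← ENNReal.ofReal_sub _ (by linarith : (0:ℝ) ≤ 1 - γ)]
          norm_num
      _ ≤ _ := h3
  -- margin approximation sets
  set Sn : ℕ → Set X := fun n =>
    {x | ∀ x', h x' ≠ h x → ε₁ + ε₂ + 1/(n+1 : ℝ) ≤ dist x x'} with hSn_def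
  have hSn_mono : Monotone Sn := by
    intro n m hnm x hx x' hx'
    have h1 : (1 : ℝ)/(m+1) ≤ 1/(n+1) := by
      apply one_div_le_one_div_of_le (by positivity)
      have : (n : ℝ) ≤ m := Nat.cast_le.2 hnm
      linarith
    have := hx x' hx'
    linarith
  have hcover : (pcSet h (ε₁ + ε₂))ᶜ ⊆ ⋃ n, Sn n := by
    intro x hx
    simp only [pcSet, Set.mem_compl_iff, Set.mem_setOf_eq, not_le] at hx
    have hlt : ε₁ + ε₂ < sInf {r : ℝ | ∃ x', h x' ≠ h x ∧ r = dist x x'} := hx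
    obtain ⟨n, hn⟩ := exists_nat_one_div_lt
      (by linarith : (0:ℝ) < sInf {r : ℝ | ∃ x', h x' ≠ h x ∧ r = dist x x'} - (ε₁ + ε₂))
    refine Set.mem_iUnion.2 ⟨n, fun x' hx' => ?_⟩
    have hmem : dist x x' ∈ {r : ℝ | ∃ x'', h x'' ≠ h x ∧ r = dist x x''} := ⟨x', hx', rfl⟩
    have hbdd : BddBelow {r : ℝ | ∃ x'', h x'' ≠ h x ∧ r = dist x x''} := by
      refine ⟨0, fun r hr => ?_⟩
      obtain ⟨x'', -, rfl⟩ := hr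
      exact dist_nonneg
    have := csInf_le hbdd hmem
    linarith
  -- choose n with μ (Sn n) > 2t
  have h2t : ENNReal.ofReal (2*t) < μ (⋃ n, Sn n) := by
    calc ENNReal.ofReal (2*t) < ENNReal.ofReal γ :=
          (ENNReal.ofReal_lt_ofReal_iff hγ0).2 (by linarith)
      _ ≤ μ (pcSet h (ε₁ + ε₂))ᶜ := hS
      _ ≤ μ (⋃ n, Sn n) := measure_mono hcover
  rw [(hSn_mono.directed_le).measure_iUnion] at h2t
  obtain ⟨n, hn⟩ := lt_iSup_iff.1 h2t
  set δ : ℝ := 1/(n+1 : ℝ) with hδ_def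
  have hδ_pos : 0 < δ := by positivity
  -- label pieces and their thickenings
  set A : L → Set X := fun l => Sn n ∩ h ⁻¹' {l} with hA_def
  set B : L → Set X := fun l => Metric.thickening (ε₂ + δ/2) (A l) with hB_def
  set W : L → Set X := fun l => Metric.cthickening (ε₁ + δ/4) (B l) with hW_def
  -- margin property
  have hA_margin : ∀ l, ∀ y ∈ A l, ∀ x, h x ≠ l → ε₁ + ε₂ + δ ≤ dist y x := by
    intro l y hy x hx
    obtain ⟨hy1, hy2⟩ := hy
    have hyl : h y = l := hy2
    exact hy1 x (by rw [hyl]; exact hx)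
  have hB_label : ∀ l, ∀ x ∈ B l, h x = l := by
    intro l x hx
    obtain ⟨y, hy, hxy⟩ := Metric.mem_thickening_iff.1 hx
    by_contra hne
    have h1 := hA_margin l y hy x hne
    have h2 : dist y x < ε₂ + δ/2 := by rw [dist_comm]; exact hxy
    linarith
  have hW_label : ∀ l, ∀ x ∈ W l, h x = l := by
    intro l x hx
    have hx' : x ∈ Metric.thickening (ε₁ + δ/2) (B l) :=
      Metric.cthickening_subset_thickening' (by linarith) (by linarith) _ hx
    obtain ⟨y, hy, hxy⟩ := Metric.mem_thickening_iff.1 hx'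
    obtain ⟨z, hz, hyz⟩ := Metric.mem_thickening_iff.1 hy
    by_contra hne
    have h1 := hA_margin l z hz x hne
    have h2 : dist z x ≤ dist z y + dist y x := dist_triangle _ _ _
    rw [dist_comm z y, dist_comm y x] at h2
    linarith
  have hW_meas : ∀ l, MeasurableSet (W l) := fun l =>
    (Metric.isClosed_cthickening).measurableSet
  have hB_meas : ∀ l, MeasurableSet (B l) := fun l =>
    (Metric.isOpen_thickening).measurableSet
  -- dichotomy at ε₁
  have hF4 : ∀ Λ : Set L, μ (⋃ l ∈ Λ, W l) ≤ 1/2 → μ (⋃ l ∈ Λ, B l) ≤ ENNReal.ofReal t' := by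
    intro Λ hΛ
    set T : Set X := (⋃ l ∈ Λ, W l)ᶜ with hT_def
    have hWΛ_meas : MeasurableSet (⋃ l ∈ Λ, W l) :=
      MeasurableSet.biUnion (Set.to_countable Λ) (fun l _ => hW_meas l)
    have hT_meas : MeasurableSet T := hWΛ_meas.compl
    have hT_half : (1/2 : ℝ≥0∞) ≤ μ T := by
      have : μ T = 1 - μ (⋃ l ∈ Λ, W l) := prob_compl_eq_one_sub hWΛ_meas
      rw [this]
      calc (1/2 : ℝ≥0∞) = 1 - 1/2 := by
            rw [← ENNReal.sub_half (a := 1) ENNReal.one_ne_top]; norm_num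
        _ ≤ 1 - μ (⋃ l ∈ Λ, W l) := tsub_le_tsub_left hΛ 1
    have hsub : (⋃ l ∈ Λ, B l) ⊆ (Metric.cthickening ε₁ T)ᶜ := by
      intro x hx
      obtain ⟨l, hlΛ, hxB⟩ := Set.mem_iUnion₂.1 hx
      intro hxc
      have h1 : ENNReal.ofReal (ε₁ + δ/4) ≤ EMetric.infEdist x T := by
        refine EMetric.le_infEdist.2 ?_
        intro y hy
        have hyW : y ∉ W l := fun hc => hy (Set.mem_iUnion₂.2 ⟨l, hlΛ, hc⟩)
        have h2 : ENNReal.ofReal (ε₁ + δ/4) < EMetric.infEdist y (B l) :=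
          lt_of_not_ge (fun hc => hyW (Metric.mem_cthickening_iff.2 hc))
        have h3 : EMetric.infEdist y (B l) ≤ edist y x := EMetric.infEdist_le_edist_of_mem hxB
        rw [edist_comm] at h3
        exact le_of_lt (lt_of_lt_of_le h2 h3)
      have h4 : EMetric.infEdist x T ≤ ENNReal.ofReal ε₁ := Metric.mem_cthickening_iff.1 hxc
      have h5 : ENNReal.ofReal ε₁ < ENNReal.ofReal (ε₁ + δ/4) :=
        (ENNReal.ofReal_lt_ofReal_iff (by linarith)).2 (by linarith)
      exact absurd (le_trans h1 h4) (not_le.2 h5)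
    calc μ (⋃ l ∈ Λ, B l) ≤ μ (Metric.cthickening ε₁ T)ᶜ := measure_mono hsub
      _ ≤ ENNReal.ofReal t' := conc_compl μ ht'c ht'1 hT_meas hT_half
  -- dichotomy at ε₂
  have hF5 : ∀ Λ : Set L, μ (⋃ l ∈ Λ, B l) ≤ 1/2 → μ (⋃ l ∈ Λ, A l) ≤ ENNReal.ofReal t := by
    intro Λ hΛ
    set T : Set X := (⋃ l ∈ Λ, B l)ᶜ with hT_def
    have hBΛ_meas : MeasurableSet (⋃ l ∈ Λ, B l) :=
      MeasurableSet.biUnion (Set.to_countable Λ) (fun l _ => hB_meas l)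
    have hT_meas : MeasurableSet T := hBΛ_meas.compl
    have hT_half : (1/2 : ℝ≥0∞) ≤ μ T := by
      have : μ T = 1 - μ (⋃ l ∈ Λ, B l) := prob_compl_eq_one_sub hBΛ_meas
      rw [this]
      calc (1/2 : ℝ≥0∞) = 1 - 1/2 := by
            rw [← ENNReal.sub_half (a := 1) ENNReal.one_ne_top]; norm_num
        _ ≤ 1 - μ (⋃ l ∈ Λ, B l) := tsub_le_tsub_left hΛ 1
    have hsub : (⋃ l ∈ Λ, A l) ⊆ (Metric.cthickening ε₂ T)ᶜ := by
      intro x hx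
      obtain ⟨l, hlΛ, hxA⟩ := Set.mem_iUnion₂.1 hx
      intro hxc
      have h1 : ENNReal.ofReal (ε₂ + δ/2) ≤ EMetric.infEdist x T := by
        refine EMetric.le_infEdist.2 ?_
        intro y hy
        have hyB : y ∉ B l := fun hc => hy (Set.mem_iUnion₂.2 ⟨l, hlΛ, hc⟩)
        have h2 : ENNReal.ofReal (ε₂ + δ/2) ≤ EMetric.infEdist y (A l) :=
          le_of_not_gt (fun hc => hyB (Metric.mem_thickening_iff_infEdist_lt.2 hc))
        have h3 : EMetric.infEdist y (A l) ≤ edist y x := EMetric.infEdist_le_edist_of_mem hxA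
        rw [edist_comm] at h3
        exact le_trans h2 h3
      have h4 : EMetric.infEdist x T ≤ ENNReal.ofReal ε₂ := Metric.mem_cthickening_iff.1 hxc
      have h5 : ENNReal.ofReal ε₂ < ENNReal.ofReal (ε₂ + δ/2) :=
        (ENNReal.ofReal_lt_ofReal_iff (by linarith)).2 (by linarith)
      exact absurd (le_trans h1 h4) (not_le.2 h5)
    calc μ (⋃ l ∈ Λ, A l) ≤ μ (Metric.cthickening ε₂ T)ᶜ := measure_mono hsub
      _ ≤ ENNReal.ofReal t := conc_compl μ htc ht1 hT_meas hT_half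
  -- the Sn n set is covered by the A pieces
  have hSn_sub : Sn n ⊆ ⋃ l, A l := by
    intro x hx
    exact Set.mem_iUnion.2 ⟨h x, hx, rfl⟩
  -- final contradiction, by cases on whether the union of the W's is heavy
  by_cases hWbig : 1/2 < μ (⋃ l, W l)
  · -- find a minimal heavy finite family
    have hiSup : μ (⋃ l, W l) = ⨆ F : Finset L, μ (⋃ l ∈ F, W l) := by
      have hd : Directed (· ⊆ ·) (fun F : Finset L => ⋃ l ∈ F, W l) := by
        intro F G
        refine ⟨F ∪ G, ?_, ?_⟩
        · intro x hx
          obtain ⟨l, hl, hx'⟩ := Set.mem_iUnion₂.1 hx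
          exact Set.mem_iUnion₂.2 ⟨l, Finset.mem_union_left _ hl, hx'⟩
        · intro x hx
          obtain ⟨l, hl, hx'⟩ := Set.mem_iUnion₂.1 hx
          exact Set.mem_iUnion₂.2 ⟨l, Finset.mem_union_right _ hl, hx'⟩
      rw [← hd.measure_iUnion]
      congr 1
      ext x
      simp only [Set.mem_iUnion]
      constructor
      · rintro ⟨l, hl⟩; exact ⟨{l}, l, by simp, hl⟩
      · rintro ⟨F, l, -, hl⟩; exact ⟨l, hl⟩
    rw [hiSup] at hWbig
    obtain ⟨F₀, hF₀⟩ := lt_iSup_iff.1 hWbig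
    obtain ⟨F, hF, hFmin⟩ := exists_minimal_finset
      (fun G : Finset L => 1/2 < μ (⋃ l ∈ G, W l)) F₀ hF₀
    have hFne : F.Nonempty := by
      rcases F.eq_empty_or_nonempty with hemp | hne
      · exfalso
        rw [hemp] at hF
        simp only [Finset.notMem_empty, Set.iUnion_of_empty, Set.iUnion_empty] at hF
        rw [measure_empty] at hF
        exact absurd hF (by simp)
      · exact hne
    obtain ⟨l₀, hl₀⟩ := hFne
    -- measure of W over F.erase l₀ is ≤ 1/2
    have h_erase : μ (⋃ l ∈ (↑(F.erase l₀) : Set L), W l) ≤ 1/2 := by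
      have := hFmin l₀ hl₀
      have heq : (⋃ l ∈ (↑(F.erase l₀) : Set L), W l) = ⋃ l ∈ F.erase l₀, W l :=
        Finset.set_biUnion_coe _ _
      rw [heq]
      exact le_of_not_gt this
    -- measure of W outside F is ≤ 1/2
    have h_out : μ (⋃ l ∈ ((↑F : Set L))ᶜ, W l) ≤ 1/2 := by
      by_contra hbig
      push_neg at hbig
      have hdisj : Disjoint (⋃ l ∈ F, W l) (⋃ l ∈ ((↑F : Set L))ᶜ, W l) := by
        rw [Set.disjoint_left]
        intro x hx1 hx2
        obtain ⟨l1, hl1, hx1'⟩ := Set.mem_iUnion₂.1 hx1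
        obtain ⟨l2, hl2, hx2'⟩ := Set.mem_iUnion₂.1 hx2
        have e1 := hW_label l1 x hx1'
        have e2 := hW_label l2 x hx2'
        have e3 : l1 = l2 := e1.symm.trans e2
        exact hl2 (e3 ▸ hl1)
      have hmeas2 : MeasurableSet (⋃ l ∈ ((↑F : Set L))ᶜ, W l) :=
        MeasurableSet.biUnion (Set.to_countable _) (fun l _ => hW_meas l)
      have hsum : μ ((⋃ l ∈ F, W l) ∪ ⋃ l ∈ ((↑F : Set L))ᶜ, W l)
          = μ (⋃ l ∈ F, W l) + μ (⋃ l ∈ ((↑F : Set L))ᶜ, W l) :=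
        measure_union hdisj hmeas2
      have hgt : (1 : ℝ≥0∞) < μ ((⋃ l ∈ F, W l) ∪ ⋃ l ∈ ((↑F : Set L))ᶜ, W l) := by
        rw [hsum]
        calc (1 : ℝ≥0∞) = 1/2 + 1/2 := by
              rw [ENNReal.add_halves]
          _ < μ (⋃ l ∈ F, W l) + μ (⋃ l ∈ ((↑F : Set L))ᶜ, W l) :=
              ENNReal.add_lt_add hF hbig
      have hle : μ ((⋃ l ∈ F, W l) ∪ ⋃ l ∈ ((↑F : Set L))ᶜ, W l) ≤ 1 := prob_le_one
      exact absurd (lt_of_lt_of_le hgt hle) (lt_irrefl _)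
    -- B over everything except l₀ is small
    have hB1 : μ (⋃ l ∈ (↑(F.erase l₀) : Set L), B l) ≤ ENNReal.ofReal t' :=
      hF4 _ h_erase
    have hB2 : μ (⋃ l ∈ ((↑F : Set L))ᶜ, B l) ≤ ENNReal.ofReal t' := hF4 _ h_out
    have hBrest : μ (⋃ l ∈ ({l₀}ᶜ : Set L), B l) ≤ 1/2 := by
      have hsub : (⋃ l ∈ ({l₀}ᶜ : Set L), B l) ⊆
          (⋃ l ∈ (↑(F.erase l₀) : Set L), B l) ∪ (⋃ l ∈ ((↑F : Set L))ᶜ, B l) := by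
        intro x hx
        obtain ⟨l, hl, hx'⟩ := Set.mem_iUnion₂.1 hx
        have hlne : l ≠ l₀ := hl
        by_cases hlF : l ∈ F
        · exact Or.inl (Set.mem_iUnion₂.2 ⟨l, by simp [Finset.mem_erase, hlne, hlF], hx'⟩)
        · exact Or.inr (Set.mem_iUnion₂.2 ⟨l, by simp [hlF], hx'⟩)
      calc μ (⋃ l ∈ ({l₀}ᶜ : Set L), B l)
          ≤ μ ((⋃ l ∈ (↑(F.erase l₀) : Set L), B l) ∪ (⋃ l ∈ ((↑F : Set L))ᶜ, B l)) :=
            measure_mono hsub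
        _ ≤ μ (⋃ l ∈ (↑(F.erase l₀) : Set L), B l) + μ (⋃ l ∈ ((↑F : Set L))ᶜ, B l) :=
            measure_union_le _ _
        _ ≤ ENNReal.ofReal t' + ENNReal.ofReal t' := add_le_add hB1 hB2
        _ = ENNReal.ofReal (t' + t') := (ENNReal.ofReal_add ht'_pos.le ht'_pos.le).symm
        _ ≤ ENNReal.ofReal (1/2) := ENNReal.ofReal_le_ofReal (by linarith)
        _ = 1/2 := half_eq
    have hArest : μ (⋃ l ∈ ({l₀}ᶜ : Set L), A l) ≤ ENNReal.ofReal t := hF5 _ hBrest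
    -- A l₀ is small
    have hAl₀ : μ (A l₀) ≤ ENNReal.ofReal t := by
      by_cases hBl₀ : μ (B l₀) ≤ 1/2
      · have h1 : μ (⋃ l ∈ ({l₀} : Set L), B l) ≤ 1/2 := by
          rw [Set.biUnion_singleton]; exact hBl₀
        have h2 := hF5 _ h1
        rw [Set.biUnion_singleton] at h2
        exact h2
      · exfalso
        push_neg at hBl₀
        have hclt := conc_lt μ ht'c ht'1 (hB_meas l₀) hBl₀.le
        have hsub : Metric.cthickening ε₁ (B l₀) ⊆ h ⁻¹' {l₀} := by
          intro x hx
          have hx' : x ∈ W l₀ :=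
            Metric.cthickening_mono (by linarith) _ hx
          exact hW_label l₀ x hx'
        have hlt2 : ENNReal.ofReal (1 - t') < ENNReal.ofReal (1 - η) :=
          lt_of_lt_of_le (lt_of_lt_of_le hclt (measure_mono hsub)) (hclass l₀)
        have := (ENNReal.ofReal_lt_ofReal_iff (by linarith : (0:ℝ) < 1 - η)).1 hlt2
        linarith
    -- contradiction with μ (Sn n) > 2t
    have hfinal : μ (Sn n) ≤ ENNReal.ofReal (2*t) := by
      have hsub : Sn n ⊆ (A l₀) ∪ (⋃ l ∈ ({l₀}ᶜ : Set L), A l) := by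
        intro x hx
        by_cases hxl : h x = l₀
        · exact Or.inl ⟨hx, hxl⟩
        · exact Or.inr (Set.mem_iUnion₂.2 ⟨h x, hxl, hx, rfl⟩)
      calc μ (Sn n) ≤ μ ((A l₀) ∪ ⋃ l ∈ ({l₀}ᶜ : Set L), A l) := measure_mono hsub
        _ ≤ μ (A l₀) + μ (⋃ l ∈ ({l₀}ᶜ : Set L), A l) := measure_union_le _ _
        _ ≤ ENNReal.ofReal t + ENNReal.ofReal t := add_le_add hAl₀ hArest
        _ = ENNReal.ofReal (2*t) := by
            rw [← ENNReal.ofReal_add ht_pos.le ht_pos.le]; ring_nf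
    exact absurd hn (not_lt.2 hfinal)
  · -- the union of the W's is not heavy: everything collapses at once
    push_neg at hWbig
    have h1 : μ (⋃ l ∈ (Set.univ : Set L), W l) ≤ 1/2 := by
      rw [Set.biUnion_univ]; exact hWbig
    have h2 := hF4 _ h1
    have h3 : μ (⋃ l ∈ (Set.univ : Set L), B l) ≤ 1/2 := by
      calc μ (⋃ l ∈ (Set.univ : Set L), B l) ≤ ENNReal.ofReal t' := h2
        _ ≤ ENNReal.ofReal (1/2) := ENNReal.ofReal_le_ofReal (by linarith)
        _ = 1/2 := half_eq
    have h4 := hF5 _ h3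
    rw [Set.biUnion_univ] at h4
    have hfinal : μ (Sn n) ≤ ENNReal.ofReal (2*t) := by
      calc μ (Sn n) ≤ μ (⋃ l, A l) := measure_mono hSn_sub
        _ ≤ ENNReal.ofReal t := h4
        _ ≤ ENNReal.ofReal (2*t) := ENNReal.ofReal_le_ofReal (by linarith)
    exact absurd hn (not_lt.2 hfinal)

end
end

section
/- Let n ≥ 1 and let x_1, …, x_n be real numbers with x_i ∈ [0, π/2] for every i. Then ∏_{i=1}^n cos(x_i) ≤ cos^n( (∑_{i=1}^n x_i)/n ). -/
open MeasureTheory Metric Finset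
open scoped ComplexOrder

noncomputable section

/-- `∏ cos(x_i) ≤ cos^n((∑ x_i)/n)` for `x_i ∈ [0, π/2]`. -/
theorem stmt5 (n : ℕ) (hn : 1 ≤ n) (x : Fin n → ℝ)
    (hx : ∀ i, x i ∈ Set.Icc (0 : ℝ) (Real.pi / 2)) :
    ∏ i, Real.cos (x i) ≤ Real.cos ((∑ i, x i) / n) ^ n := by
  have hn' : (0 : ℝ) < n := by exact_mod_cast hn
  have hcosnn : ∀ i, 0 ≤ Real.cos (x i) := fun i =>
    Real.cos_nonneg_of_mem_Icc ⟨le_trans (by linarith [Real.pi_pos]) (hx i).1, (hx i).2⟩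
  -- AM-GM
  have hw : ∀ i ∈ (univ : Finset (Fin n)), (0 : ℝ) ≤ 1 / n := fun _ _ => by positivity
  have hw' : ∑ _i ∈ (univ : Finset (Fin n)), (1 / n : ℝ) = 1 := by
    simp [Finset.sum_const]
    field_simp
  have amgm := Real.geom_mean_le_arith_mean_weighted univ (fun _ => (1 / n : ℝ))
    (fun i => Real.cos (x i)) hw hw' (fun i _ => hcosnn i)
  have hprod : ∏ i, Real.cos (x i) ^ (1 / n : ℝ) = (∏ i, Real.cos (x i)) ^ (1 / n : ℝ) := by
    rw [← Real.finset_prod_rpow _ _ (fun i _ => hcosnn i)]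
  -- Jensen
  have hjen := (strictConcaveOn_cos_Icc.concaveOn).le_map_sum (t := univ)
    (w := fun _ => (1 / n : ℝ)) (p := x) hw hw'
    (fun i _ => ⟨le_trans (by linarith [Real.pi_pos]) (hx i).1, (hx i).2⟩)
  simp only [smul_eq_mul] at hjen
  have hsum : ∑ i, (1 / n : ℝ) * x i = (∑ i, x i) / n := by
    rw [← Finset.mul_sum]; ring
  rw [hsum] at hjen
  have hsum2 : ∑ i, (1 / n : ℝ) * Real.cos (x i) = (∑ i, Real.cos (x i)) / n := by
    rw [← Finset.mul_sum]; ring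
  rw [hsum2] at hjen
  -- combine
  have h1 : (∏ i, Real.cos (x i)) ^ (1 / n : ℝ) ≤ (∑ i, Real.cos (x i)) / n := by
    rw [← hprod]
    calc ∏ i, Real.cos (x i) ^ (1 / n : ℝ) ≤ ∑ i, (1 / n : ℝ) * Real.cos (x i) := amgm
    _ = (∑ i, Real.cos (x i)) / n := hsum2
  have hPnn : 0 ≤ ∏ i, Real.cos (x i) := Finset.prod_nonneg (fun i _ => hcosnn i)
  have h2 : ((∏ i, Real.cos (x i)) ^ (1 / n : ℝ)) ^ n ≤ Real.cos ((∑ i, x i) / n) ^ n := by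
    apply pow_le_pow_left₀ (Real.rpow_nonneg hPnn _)
    exact le_trans h1 hjen
  calc ∏ i, Real.cos (x i)
      = ((∏ i, Real.cos (x i)) ^ (1 / n : ℝ)) ^ n := by
        rw [← Real.rpow_natCast ((∏ i, Real.cos (x i)) ^ (1 / n : ℝ)) n,
          ← Real.rpow_mul hPnn]
        rw [one_div, inv_mul_cancel₀ (ne_of_gt hn'), Real.rpow_one]
    _ ≤ _ := h2

end
end
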